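/- In O(U_q(2)) with central unitary u and standard SU_q(2) generators α, γ (relations αγ = qγα, αγ* = qγ*α, γγ* = γ*γ, α*α + γγ* = 1, αα* + q²γγ* = 1), for 0 ≤ s ≤ 1 the elements ξ = (1−s²)γγ* + s(γαu + α*γ*u*) and ζ = (1−s²)αγ* + s(α²u − qγ*²u*) satisfy ξ* = ξ, ζξ = q²ξζ, ζζ* = (s² + q²ξ)(1 − q²ξ), and ζ*ζ = (s² + ξ)(1 − ξ). -/

import Mathlib

set_option maxHeartbeats 4000000 in
/-- in `O(U_q(2))`, the elements `ξ` and `ζ` of the generic Podleś sphere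
satisfy `ξ* = ξ`, `ζξ = q²ξζ`, `ζζ* = (s² + q²ξ)(1 − q²ξ)` and `ζ*ζ = (s² + ξ)(1 − ξ)`. -/
theorem stmt16 (U : Type) [Ring U] [Algebra ℂ U] [StarRing U] [StarModule ℂ U]
    (q s : ℝ) (hq : 0 < q ∧ q < 1) (hs : 0 ≤ s ∧ s ≤ 1)
    (u α γ : U)
    (hu_central : ∀ x : U, u * x = x * u)
    (hu_unitary : u * star u = 1 ∧ star u * u = 1)
    (h1 : α * γ = (q : ℂ) • (γ * α))
    (h2 : α * star γ = (q : ℂ) • (star γ * α))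
    (h3 : γ * star γ = star γ * γ)
    (h4 : star α * α + γ * star γ = 1)
    (h5 : α * star α + ((q : ℂ)^2) • (γ * star γ) = 1)
    (ξ ζ : U)
    (hξ : ξ = ((1 - (s : ℂ)^2)) • (γ * star γ) +
      (s : ℂ) • (γ * α * u + star α * star γ * star u))
    (hζ : ζ = ((1 - (s : ℂ)^2)) • (α * star γ) +
      (s : ℂ) • (α^2 * u - (q : ℂ) • ((star γ)^2 * star u))) :
    star ξ = ξ ∧
    ζ * ξ = ((q : ℂ)^2) • (ξ * ζ) ∧
    ζ * star ζ = (((s : ℂ)^2) • (1 : U) + ((q : ℂ)^2) • ξ) * (1 - ((q : ℂ)^2) • ξ) ∧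
    star ζ * ζ = (((s : ℂ)^2) • (1 : U) + ξ) * (1 - ξ) := by
  obtain ⟨huu, huu'⟩ := hu_unitary
  subst hξ hζ
  -- starred relations
  have h1s : star γ * star α = (q : ℂ) • (star α * star γ) := by
    have := congrArg star h1
    simpa [star_mul, star_smul, Complex.star_def, Complex.conj_ofReal] using this
  have h2s : γ * star α = (q : ℂ) • (star α * γ) := by
    have := congrArg star h2
    simpa [star_mul, star_smul, Complex.star_def, Complex.conj_ofReal] using this
  have h3' : star γ * γ = γ * star γ := h3.symm
  have qne : (q : ℂ) ≠ 0 := by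
    exact_mod_cast Complex.ofReal_ne_zero.mpr (ne_of_gt hq.1)
  have a6 : star α * α = 1 - γ * star γ := eq_sub_of_add_eq h4
  have a7 : α * star α = 1 - ((q : ℂ)^2) • (γ * star γ) := eq_sub_of_add_eq h5
  -- continuation forms
  have crs : ∀ (a b : U) (c : ℂ), a * b = c • (b * a) →
      ∀ x : U, a * (b * x) = c • (b * (a * x)) := by
    intro a b c h x
    rw [← mul_assoc, h, smul_mul_assoc, mul_assoc]
  have h1si : star α * star γ = (q : ℂ)⁻¹ • (star γ * star α) :=
    ((inv_smul_eq_iff₀ qne).mpr h1s).symm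
  have h2si : star α * γ = (q : ℂ)⁻¹ • (γ * star α) :=
    ((inv_smul_eq_iff₀ qne).mpr h2s).symm
  have h1c := crs _ _ _ h1
  have h2c := crs _ _ _ h2
  have h1sc := crs _ _ _ h1si
  have h2sc := crs _ _ _ h2si
  have h3c : ∀ x : U, star γ * (γ * x) = γ * (star γ * x) := by
    intro x; rw [← mul_assoc, h3', mul_assoc]
  have a6c : ∀ x : U, star α * (α * x) = x - γ * (star γ * x) := by
    intro x; rw [← mul_assoc, a6, sub_mul, one_mul, mul_assoc]
  have a7c : ∀ x : U, α * (star α * x) = x - ((q : ℂ)^2) • (γ * (star γ * x)) := by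
    intro x; rw [← mul_assoc, a7, sub_mul, one_mul, smul_mul_assoc, mul_assoc]
  -- u commutation
  have hc : ∀ x : U, x * u = u * x := fun x => (hu_central x).symm
  have hsu : ∀ x : U, x * star u = star u * x := by
    intro x
    have := congrArg star (hu_central (star x))
    simpa [star_mul] using this
  have hcc : ∀ y x : U, y * (u * x) = u * (y * x) := by
    intro y x; rw [← mul_assoc, hc y, mul_assoc]
  have hsucc : ∀ y x : U, y * (star u * x) = star u * (y * x) := by
    intro y x; rw [← mul_assoc, hsu y, mul_assoc]
  have c1 := hc α; have c2 := hc (star α); have c3 := hc γ; have c4 := hc (star γ)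
  have d1 := hsu α; have d2 := hsu (star α); have d3 := hsu γ; have d4 := hsu (star γ)
  have c1c := hcc α; have c2c := hcc (star α); have c3c := hcc γ; have c4c := hcc (star γ)
  have d1c := hsucc α; have d2c := hsucc (star α); have d3c := hsucc γ; have d4c := hsucc (star γ)
  have e1 := hsu u
  have e1c := hsucc u
  clear hc hsu hcc hsucc
  have huc1 : ∀ x : U, u * (star u * x) = x := by
    intro x; rw [← mul_assoc, huu, one_mul]
  have huc2 : ∀ x : U, star u * (u * x) = x := by
    intro x; rw [← mul_assoc, huu', one_mul]
  refine ⟨?_, ?_, ?_, ?_⟩ <;>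
  · simp only [pow_two, star_add, star_smul, star_mul, star_sub, star_one, star_star,
      Complex.star_def, map_sub, map_one, map_pow, map_inv₀, Complex.conj_ofReal,
      mul_add, add_mul, mul_sub, sub_mul, smul_add, smul_sub, smul_smul,
      mul_smul_comm, smul_mul_assoc, mul_assoc, mul_one, one_mul,
      h1, h2, h1si, h2si, h3', a6, a7, h1c, h2c, h1sc, h2sc, h3c, a6c, a7c,
      c1, c2, c3, c4, d1, d2, d3, d4, c1c, c2c, c3c, c4c, d1c, d2c, d3c, d4c,
      e1, e1c, huc1, huc2, huu, huu']
    match_scalars <;> rw [← sub_eq_zero] <;> field_simp [qne] <;> (try ring1) <;> (try (ring_nf; field_simp [qne])) <;> (try ring1)
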